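/- Let G be any subgroup of PL₊(I) (not necessarily finitely generated). Then G admits a transition chain if and only if G admits a pair of element orbitals sharing exactly one endpoint (a 'one-sided overlap'); equivalently, each of these conditions holds if and only if G admits a bad overlap. -/

import Mathlib

open Set

namespace PLPaper

/-- We model `PL₊(I)` inside the group of bijections of `ℝ` with *opposite*
composition, so that the group acts on `ℝ` on the right:
`x · (g * h) = (x · g) · h`. -/
abbrev PermR : Type := (Equiv.Perm ℝ)ᵐᵒᵖ

/-- The (right) action of `g` on the point `x`. -/
def ap (g : PermR) (x : ℝ) : ℝ := g.unop x

/-- `g` is affine on a neighbourhood of `x`. -/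
def IsLocallyAffineAt (g : PermR) (x : ℝ) : Prop :=
  ∃ m b : ℝ, ∀ᶠ y in nhds x, ap g y = m * y + b

/-- The breakpoints of `g`: points of `(0,1)` where `g` is not locally affine
(equivalently, for a PL map, where the derivative fails to exist). -/
def Breakpoints (g : PermR) : Set ℝ :=
  {x ∈ Ioo (0:ℝ) 1 | ¬ IsLocallyAffineAt g x}

/-- `g` is an orientation-preserving piecewise-linear homeomorphism of `[0,1]`
(extended by the identity to all of `ℝ`), with finitely many breakpoints. -/
def IsPL (g : PermR) : Prop :=
  StrictMono (ap g) ∧ (∀ x ∉ Ioo (0:ℝ) 1, ap g x = x) ∧ (Breakpoints g).Finite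

/-- The support of `g`. -/
def Supp (g : PermR) : Set ℝ := {x | ap g x ≠ x}

/-- `(a,b)` is an orbital of `g`, i.e. a connected component of `Supp g`. -/
def IsOrbital (g : PermR) (a b : ℝ) : Prop :=
  a < b ∧ Ioo a b ⊆ Supp g ∧ a ∉ Supp g ∧ b ∉ Supp g

/-- The support of a subgroup `G`. -/
def GSupp (G : Subgroup PermR) : Set ℝ := ⋃ g ∈ (G : Set PermR), Supp g

/-- `(a,b)` is an orbital of the group `G`, i.e. a connected component of its support. -/
def IsGroupOrbital (G : Subgroup PermR) (a b : ℝ) : Prop :=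
  a < b ∧ Ioo a b ⊆ GSupp G ∧ a ∉ GSupp G ∧ b ∉ GSupp G

/-- The pair `g, h` carries a transition chain: orbitals `(a,b)` of `g` and
`(c,d)` of `h` with `a < c < b < d`. -/
def ElemsTransitionChain (g h : PermR) : Prop :=
  ∃ a b c d : ℝ, IsOrbital g a b ∧ IsOrbital h c d ∧ a < c ∧ c < b ∧ b < d

/-- The pair `g, h` carries a one-sided overlap: orbitals `(a,b)` of `g` and
`(a,c)` of `h`, or `(a,b)` of `g` and `(c,b)` of `h`, where `a < c < b`. -/
def ElemsOneSidedOverlap (g h : PermR) : Prop :=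
  ∃ a b c : ℝ, a < c ∧ c < b ∧
    ((IsOrbital g a b ∧ IsOrbital h a c) ∨ (IsOrbital g a b ∧ IsOrbital h c b))

def AdmitsTransitionChain (G : Subgroup PermR) : Prop :=
  ∃ g ∈ G, ∃ h ∈ G, ElemsTransitionChain g h

def AdmitsOneSidedOverlap (G : Subgroup PermR) : Prop :=
  ∃ g ∈ G, ∃ h ∈ G, ElemsOneSidedOverlap g h

/-- `G` admits a bad overlap: orbitals `A` of `f ∈ G` and `B` of `g ∈ G` which
intersect, are distinct, and neither closure is contained in the other orbital. -/
def AdmitsBadOverlap (G : Subgroup PermR) : Prop :=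
  ∃ f ∈ G, ∃ g ∈ G, ∃ a b c d : ℝ, IsOrbital f a b ∧ IsOrbital g c d ∧
    (Ioo a b ∩ Ioo c d).Nonempty ∧ Ioo a b ≠ Ioo c d ∧
    ¬ Icc a b ⊆ Ioo c d ∧ ¬ Icc c d ⊆ Ioo a b

/-- A tower: a set of signed orbitals `((a,b), g)` with pairwise nested orbitals,
where equal orbitals force equal signatures. -/
def IsTower (T : Set ((ℝ × ℝ) × PermR)) : Prop :=
  (∀ p ∈ T, IsOrbital p.2 p.1.1 p.1.2) ∧
  (∀ p ∈ T, ∀ q ∈ T,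
      Ioo p.1.1 p.1.2 ⊆ Ioo q.1.1 q.1.2 ∨ Ioo q.1.1 q.1.2 ⊆ Ioo p.1.1 p.1.2) ∧
  (∀ p ∈ T, ∀ q ∈ T, p.1 = q.1 → p.2 = q.2)

/-- `G` admits the tower `T` if `T` is a tower all of whose signatures lie in `G`. -/
def AdmitsTower (G : Subgroup PermR) (T : Set ((ℝ × ℝ) × PermR)) : Prop :=
  IsTower T ∧ ∀ p ∈ T, p.2 ∈ G

def AdmitsInfiniteTower (G : Subgroup PermR) : Prop :=
  ∃ T : Set ((ℝ × ℝ) × PermR), AdmitsTower G T ∧ T.Infinite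

/-- The set of breakpoints of the elements of a set `S`. -/
def BreakSet (S : Set PermR) : Set ℝ := ⋃ g ∈ S, Breakpoints g

/-- The derived length of a group: the least `n` with `derivedSeries G n = ⊥`. -/
noncomputable def derivedLength (G : Type*) [Group G] : ℕ :=
  sInf {n : ℕ | derivedSeries G n = ⊥}

section Lemmas

lemma ap_mul (p q : PermR) (x : ℝ) : ap (p * q) x = ap q (ap p x) := rfl

lemma ap_one (x : ℝ) : ap 1 x = x := rfl

lemma ap_inv_ap (p : PermR) (x : ℝ) : ap p⁻¹ (ap p x) = x := by
  show (p⁻¹).unop (p.unop x) = x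
  rw [MulOpposite.unop_inv]
  exact Equiv.symm_apply_apply _ _

lemma ap_ap_inv (p : PermR) (x : ℝ) : ap p (ap p⁻¹ x) = x := by
  show p.unop ((p⁻¹).unop x) = x
  rw [MulOpposite.unop_inv]
  exact Equiv.apply_symm_apply _ _

lemma mem_supp {p : PermR} {x : ℝ} : x ∈ Supp p ↔ ap p x ≠ x := Iff.rfl

lemma not_mem_supp {p : PermR} {x : ℝ} : x ∉ Supp p ↔ ap p x = x := not_not

lemma ap_inv_eq_self {p : PermR} {x : ℝ} : ap p⁻¹ x = x ↔ ap p x = x := by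
  constructor
  · intro h
    calc ap p x = ap p (ap p⁻¹ x) := by rw [h]
    _ = x := ap_ap_inv p x
  · intro h
    calc ap p⁻¹ x = ap p⁻¹ (ap p x) := by rw [h]
    _ = x := ap_inv_ap p x

lemma supp_inv (p : PermR) : Supp p⁻¹ = Supp p := by
  ext x
  exact not_congr ap_inv_eq_self


lemma IsPL.mono {p : PermR} (hp : IsPL p) : StrictMono (ap p) := hp.1

lemma IsPL.continuous {p : PermR} (hp : IsPL p) : Continuous (ap p) :=
  (StrictMono.orderIsoOfSurjective (ap p) hp.1 p.unop.surjective).continuous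

lemma IsPL.supp_subset {p : PermR} (hp : IsPL p) : Supp p ⊆ Ioo (0:ℝ) 1 := by
  intro x hx
  by_contra hc
  exact hx (hp.2.1 x hc)

lemma IsPL.supp_open {p : PermR} (hp : IsPL p) : IsOpen (Supp p) :=
  isOpen_ne_fun hp.continuous continuous_id

lemma IsOrbital.subset_unit {p : PermR} {α β : ℝ} (hp : IsPL p) (ho : IsOrbital p α β) :
    0 ≤ α ∧ β ≤ 1 := by
  have h := (Ioo_subset_Ioo_iff ho.1).mp (ho.2.1.trans hp.supp_subset)
  exact h

lemma ap_inv_lt_iff {p : PermR} (hp : IsPL p) {x y : ℝ} : ap p⁻¹ x < y ↔ x < ap p y := by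
  constructor
  · intro h
    have := hp.1 h
    rwa [ap_ap_inv] at this
  · intro h
    have hm : StrictMono (ap p⁻¹) := fun u v huv => by
      rcases lt_trichotomy (ap p⁻¹ u) (ap p⁻¹ v) with h1 | h1 | h1
      · exact h1
      · exact absurd (by rw [← ap_ap_inv p u, ← ap_ap_inv p v, h1]) huv.ne
      · exact absurd (by have := hp.1 h1; rwa [ap_ap_inv, ap_ap_inv] at this) (not_lt.mpr huv.le)
    have := hm h
    rwa [ap_inv_ap] at this

lemma IsPL.inv_mono {p : PermR} (hp : IsPL p) : StrictMono (ap p⁻¹) := fun u v huv => by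
  rcases lt_trichotomy (ap p⁻¹ u) (ap p⁻¹ v) with h1 | h1 | h1
  · exact h1
  · exact absurd (by rw [← ap_ap_inv p u, ← ap_ap_inv p v, h1]) huv.ne
  · exact absurd (by have := hp.1 h1; rwa [ap_ap_inv, ap_ap_inv] at this) (not_lt.mpr huv.le)

/-- Support of conjugate. -/
lemma supp_conj (γ h : PermR) : Supp (γ * h * γ⁻¹) = (ap γ) ⁻¹' Supp h := by
  ext x
  simp only [mem_supp, Set.mem_preimage]
  rw [ap_mul, ap_mul]
  constructor
  · intro hx hc
    exact hx (by rw [hc, ap_inv_ap])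
  · intro hx hc
    apply hx
    have : ap γ (ap γ⁻¹ (ap h (ap γ x))) = ap γ x := congrArg (ap γ) hc
    rwa [ap_ap_inv] at this

lemma mem_supp_conj {γ h : PermR} {x : ℝ} : x ∈ Supp (γ * h * γ⁻¹) ↔ ap γ x ∈ Supp h := by
  rw [supp_conj]; rfl

/-- Conjugation carries orbitals to orbitals. -/
lemma IsOrbital.conj {h : PermR} {α β : ℝ} (ho : IsOrbital h α β) (γ : PermR) (hγ : IsPL γ) :
    IsOrbital (γ * h * γ⁻¹) (ap γ⁻¹ α) (ap γ⁻¹ β) := by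
  have hm := hγ.inv_mono
  refine ⟨hm ho.1, ?_, ?_, ?_⟩
  · intro x hx
    rw [mem_supp_conj]
    apply ho.2.1
    have h1 : α < ap γ x := by
      have := hγ.1 hx.1
      rwa [ap_ap_inv] at this
    have h2 : ap γ x < β := by
      have := hγ.1 hx.2
      rwa [ap_ap_inv] at this
    exact ⟨h1, h2⟩
  · rw [mem_supp_conj.not_left, ap_ap_inv]
    exact not_mem_supp.mp ho.2.2.1
  · rw [mem_supp_conj.not_left, ap_ap_inv]
    exact not_mem_supp.mp ho.2.2.2


lemma not_breakpoint_affine {p : PermR} {x : ℝ} (hx : x ∈ Ioo (0:ℝ) 1)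
    (hb : x ∉ Breakpoints p) : IsLocallyAffineAt p x := by
  by_contra hc
  exact hb ⟨hx, hc⟩

/-- A PL map with no breakpoints on an interval inside `(0,1)` is affine there. -/
lemma affine_of_no_breakpoints {p : PermR} {u v : ℝ} (huv : u < v)
    (hJ : Ioo u v ⊆ Ioo (0:ℝ) 1) (hB : ∀ x ∈ Ioo u v, x ∉ Breakpoints p) :
    ∃ m c : ℝ, ∀ x ∈ Ioo u v, ap p x = m * x + c := by
  have hla : ∀ x ∈ Ioo u v, IsLocallyAffineAt p x := fun x hx =>
    not_breakpoint_affine (hJ hx) (hB x hx)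
  have hx₀ : (u + v) / 2 ∈ Ioo u v := ⟨by linarith, by linarith⟩
  obtain ⟨m, c, heq⟩ := hla _ hx₀
  set S : Set ℝ := {x | ∀ᶠ y in nhds x, ap p y = m * y + c} with hS
  set O : Set ℝ := {x | ∃ m' c' : ℝ, ¬(m' = m ∧ c' = c) ∧
      ∀ᶠ y in nhds x, ap p y = m' * y + c'} with hO
  have hSopen : IsOpen S := isOpen_setOf_eventually_nhds
  have hOopen : IsOpen O := by
    rw [isOpen_iff_mem_nhds]
    rintro x ⟨m', c', hne, hev⟩
    filter_upwards [hev.eventually_nhds] with y hy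
    exact ⟨m', c', hne, hy⟩
  have hcover : Ioo u v ⊆ S ∪ O := by
    intro x hx
    obtain ⟨m', c', hev⟩ := hla x hx
    by_cases hc : m' = m ∧ c' = c
    · left
      rw [hS]
      simpa [hc.1, hc.2] using hev
    · right
      exact ⟨m', c', hc, hev⟩
  have hdisj : ∀ z, z ∈ S → z ∈ O → False := by
    rintro z hzS ⟨m', c', hne, hev'⟩
    have hboth := hzS.and hev'
    rw [Metric.eventually_nhds_iff] at hboth
    obtain ⟨ε, hε, hball⟩ := hboth
    have h1 := hball (show dist z z < ε by simpa using hε)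
    have h2 := hball (show dist (z + ε / 2) z < ε by
      rw [Real.dist_eq, add_sub_cancel_left, abs_of_nonneg (by linarith)]
      linarith)
    have hmm : m = m' := by
      have hε2 : (ε / 2) ≠ 0 := by positivity
      have h3 := h1.1.symm.trans h1.2
      have h4 := h2.1.symm.trans h2.2
      have : m * (ε / 2) = m' * (ε / 2) := by ring_nf at h3 h4 ⊢; linarith
      exact mul_right_cancel₀ hε2 this
    have hcc : c = c' := by
      have h3 := h1.1.symm.trans h1.2
      rw [hmm] at h3
      linarith
    exact hne ⟨hmm.symm, hcc.symm⟩
  have hOempty : Ioo u v ∩ O = ∅ := by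
    by_contra hne
    obtain ⟨y, hy⟩ := Set.nonempty_iff_ne_empty.mpr hne
    obtain ⟨z, hz⟩ := (isPreconnected_Ioo (a := u) (b := v)) S O hSopen hOopen hcover
      ⟨(u + v) / 2, hx₀, heq⟩ ⟨y, hy⟩
    exact hdisj z hz.2.1 hz.2.2
  refine ⟨m, c, fun x hx => ?_⟩
  have hxS : x ∈ S := by
    rcases hcover hx with h | h
    · exact h
    · exact absurd (Set.mem_inter hx h) (by rw [hOempty]; exact fun h => h)
  exact hxS.self_of_nhds


/-! ### Germs and slopes at one-sided neighbourhoods of fixed points -/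

def HasRSlope (p : PermR) (a m : ℝ) : Prop :=
  ∀ᶠ x in nhdsWithin a (Ioi a), ap p x = m * (x - a) + a

def HasLSlope (p : PermR) (b m : ℝ) : Prop :=
  ∀ᶠ x in nhdsWithin b (Iio b), ap p x = m * (x - b) + b

lemma exists_no_break_right {p : PermR} (hp : IsPL p) {a : ℝ} (ha1 : a < 1) :
    ∃ δ > 0, a + δ ≤ 1 ∧ ∀ x ∈ Ioo a (a + δ), x ∉ Breakpoints p := by
  have hfin : (Breakpoints p ∩ Ioi a).Finite := hp.2.2.subset inter_subset_left
  by_cases hne : (Breakpoints p ∩ Ioi a).Nonempty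
  · have hmem := hne.csInf_mem hfin
    have hgt : a < sInf (Breakpoints p ∩ Ioi a) := hmem.2
    refine ⟨min (sInf (Breakpoints p ∩ Ioi a) - a) (1 - a), by simp [hgt, ha1], by
      have := min_le_right (sInf (Breakpoints p ∩ Ioi a) - a) (1 - a); linarith, ?_⟩
    intro x hx hb
    have hxT : x ∈ Breakpoints p ∩ Ioi a := ⟨hb, hx.1⟩
    have hle : sInf (Breakpoints p ∩ Ioi a) ≤ x :=
      csInf_le hfin.bddBelow hxT
    have := min_le_left (sInf (Breakpoints p ∩ Ioi a) - a) (1 - a)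
    have := hx.2
    linarith
  · refine ⟨1 - a, by linarith, by linarith, ?_⟩
    intro x hx hb
    exact hne ⟨x, hb, hx.1⟩

lemma exists_no_break_left {p : PermR} (hp : IsPL p) {b : ℝ} (hb0 : 0 < b) :
    ∃ δ > 0, 0 ≤ b - δ ∧ ∀ x ∈ Ioo (b - δ) b, x ∉ Breakpoints p := by
  have hfin : (Breakpoints p ∩ Iio b).Finite := hp.2.2.subset inter_subset_left
  by_cases hne : (Breakpoints p ∩ Iio b).Nonempty
  · have hmem := hne.csSup_mem hfin
    have hlt : sSup (Breakpoints p ∩ Iio b) < b := hmem.2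
    refine ⟨min (b - sSup (Breakpoints p ∩ Iio b)) b, by simp [hlt, hb0], by
      have := min_le_right (b - sSup (Breakpoints p ∩ Iio b)) b; linarith, ?_⟩
    intro x hx hb'
    have hxT : x ∈ Breakpoints p ∩ Iio b := ⟨hb', hx.2⟩
    have hle : x ≤ sSup (Breakpoints p ∩ Iio b) :=
      le_csSup hfin.bddAbove hxT
    have := min_le_left (b - sSup (Breakpoints p ∩ Iio b)) b
    have := hx.1
    linarith
  · refine ⟨b, hb0, by linarith, ?_⟩
    intro x hx hb'
    exact hne ⟨x, hb', hx.2⟩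

lemma exists_rslope {p : PermR} (hp : IsPL p) {a : ℝ} (ha0 : 0 ≤ a) (ha1 : a < 1)
    (hfix : ap p a = a) : ∃ m : ℝ, HasRSlope p a m := by
  obtain ⟨δ, hδ, hδ1, hnb⟩ := exists_no_break_right hp ha1
  have hJ : Ioo a (a + δ) ⊆ Ioo (0:ℝ) 1 := fun x hx =>
    ⟨lt_of_le_of_lt ha0 hx.1, lt_of_lt_of_le hx.2 hδ1⟩
  obtain ⟨m, c, heq⟩ := affine_of_no_breakpoints (by linarith) hJ hnb
  have hmem : Ioo a (a + δ) ∈ nhdsWithin a (Ioi a) :=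
    Ioo_mem_nhdsGT_of_mem ⟨le_refl a, by linarith⟩
  have hev : ∀ᶠ x in nhdsWithin a (Ioi a), ap p x = m * x + c := by
    filter_upwards [hmem] with x hx
    exact heq x hx
  have ht1 : Filter.Tendsto (ap p) (nhdsWithin a (Ioi a)) (nhds a) := by
    have h0 : Filter.Tendsto (ap p) (nhdsWithin a (Ioi a)) (nhds (ap p a)) :=
      (hp.continuous.tendsto a).mono_left nhdsWithin_le_nhds
    rwa [hfix] at h0
  have ht2 : Filter.Tendsto (fun x => m * x + c) (nhdsWithin a (Ioi a)) (nhds a) :=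
    ht1.congr' hev
  have ht3 : Filter.Tendsto (fun x => m * x + c) (nhdsWithin a (Ioi a)) (nhds (m * a + c)) :=
    (((continuous_const.mul continuous_id).add continuous_const).tendsto a).mono_left
      nhdsWithin_le_nhds
  have hac : m * a + c = a := tendsto_nhds_unique ht3 ht2
  refine ⟨m, ?_⟩
  filter_upwards [hev] with x hx
  rw [hx]
  ring_nf
  linarith [hac]

lemma exists_lslope {p : PermR} (hp : IsPL p) {b : ℝ} (hb0 : 0 < b) (hb1 : b ≤ 1)
    (hfix : ap p b = b) : ∃ m : ℝ, HasLSlope p b m := by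
  obtain ⟨δ, hδ, hδ0, hnb⟩ := exists_no_break_left hp hb0
  have hJ : Ioo (b - δ) b ⊆ Ioo (0:ℝ) 1 := fun x hx =>
    ⟨lt_of_le_of_lt hδ0 hx.1, lt_of_lt_of_le hx.2 hb1⟩
  obtain ⟨m, c, heq⟩ := affine_of_no_breakpoints (by linarith) hJ hnb
  have hmem : Ioo (b - δ) b ∈ nhdsWithin b (Iio b) :=
    Ioo_mem_nhdsLT_of_mem ⟨by linarith, le_refl b⟩
  have hev : ∀ᶠ x in nhdsWithin b (Iio b), ap p x = m * x + c := by
    filter_upwards [hmem] with x hx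
    exact heq x hx
  have ht1 : Filter.Tendsto (ap p) (nhdsWithin b (Iio b)) (nhds b) := by
    have h0 : Filter.Tendsto (ap p) (nhdsWithin b (Iio b)) (nhds (ap p b)) :=
      (hp.continuous.tendsto b).mono_left nhdsWithin_le_nhds
    rwa [hfix] at h0
  have ht2 : Filter.Tendsto (fun x => m * x + c) (nhdsWithin b (Iio b)) (nhds b) :=
    ht1.congr' hev
  have ht3 : Filter.Tendsto (fun x => m * x + c) (nhdsWithin b (Iio b)) (nhds (m * b + c)) :=
    (((continuous_const.mul continuous_id).add continuous_const).tendsto b).mono_left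
      nhdsWithin_le_nhds
  have hac : m * b + c = b := tendsto_nhds_unique ht3 ht2
  refine ⟨m, ?_⟩
  filter_upwards [hev] with x hx
  rw [hx]
  ring_nf
  linarith [hac]

lemma rslope_unique {p : PermR} {a m m' : ℝ} (h : HasRSlope p a m) (h' : HasRSlope p a m') :
    m = m' := by
  obtain ⟨x, hx, hxa⟩ := ((h.and h').and self_mem_nhdsWithin).exists
  have hne : x - a ≠ 0 := sub_ne_zero.mpr (ne_of_gt hxa)
  have : m * (x - a) = m' * (x - a) := by
    have := hx.1.symm.trans hx.2
    linarith
  exact mul_right_cancel₀ hne this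

lemma lslope_unique {p : PermR} {b m m' : ℝ} (h : HasLSlope p b m) (h' : HasLSlope p b m') :
    m = m' := by
  obtain ⟨x, hx, hxa⟩ := ((h.and h').and self_mem_nhdsWithin).exists
  have hne : x - b ≠ 0 := sub_ne_zero.mpr (ne_of_lt hxa)
  have : m * (x - b) = m' * (x - b) := by
    have := hx.1.symm.trans hx.2
    linarith
  exact mul_right_cancel₀ hne this

lemma rslope_pos {p : PermR} (hp : IsPL p) {a m : ℝ} (hfix : ap p a = a)
    (h : HasRSlope p a m) : 0 < m := by
  obtain ⟨x, hx, hxa⟩ := (h.and self_mem_nhdsWithin).exists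
  have hgt : a < ap p x := by
    have := hp.1 (show a < x from hxa)
    rwa [hfix] at this
  rw [hx] at hgt
  by_contra hm
  push_neg at hm
  nlinarith

lemma lslope_pos {p : PermR} (hp : IsPL p) {b m : ℝ} (hfix : ap p b = b)
    (h : HasLSlope p b m) : 0 < m := by
  obtain ⟨x, hx, hxa⟩ := (h.and self_mem_nhdsWithin).exists
  have hgt : ap p x < b := by
    have := hp.1 (show x < b from hxa)
    rwa [hfix] at this
  rw [hx] at hgt
  by_contra hm
  push_neg at hm
  nlinarith

lemma rslope_mul {p q : PermR} (hp : IsPL p) {a mp mq : ℝ} (hfp : ap p a = a)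
    (h1 : HasRSlope p a mp) (h2 : HasRSlope q a mq) : HasRSlope (p * q) a (mp * mq) := by
  have hmp : 0 < mp := rslope_pos hp hfp h1
  obtain ⟨u, hu, hsub⟩ := mem_nhdsGT_iff_exists_Ioo_subset.mp h2
  have hεpos : 0 < (u - a) / mp := by
    have : 0 < u - a := sub_pos.mpr hu
    positivity
  have hmem : Ioo a (a + (u - a) / mp) ∈ nhdsWithin a (Ioi a) :=
    Ioo_mem_nhdsGT_of_mem ⟨le_refl a, by linarith⟩
  filter_upwards [h1, hmem] with x hx1 hx2
  have hpx : ap p x ∈ Ioo a u := by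
    rw [hx1]
    constructor
    · nlinarith [hx2.1]
    · have h5 : x - a < (u - a) / mp := by linarith [hx2.2]
      have h6 := (lt_div_iff₀ hmp).mp h5
      nlinarith
  have := hsub hpx
  rw [ap_mul, this, hx1]
  ring

lemma lslope_mul {p q : PermR} (hp : IsPL p) {b mp mq : ℝ} (hfp : ap p b = b)
    (h1 : HasLSlope p b mp) (h2 : HasLSlope q b mq) : HasLSlope (p * q) b (mp * mq) := by
  have hmp : 0 < mp := lslope_pos hp hfp h1
  obtain ⟨u, hu, hsub⟩ := mem_nhdsLT_iff_exists_Ioo_subset.mp h2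
  have hεpos : 0 < (b - u) / mp := by
    have : 0 < b - u := sub_pos.mpr hu
    positivity
  have hmem : Ioo (b - (b - u) / mp) b ∈ nhdsWithin b (Iio b) :=
    Ioo_mem_nhdsLT_of_mem ⟨by linarith, le_refl b⟩
  filter_upwards [h1, hmem] with x hx1 hx2
  have hpx : ap p x ∈ Ioo u b := by
    rw [hx1]
    constructor
    · have h5 : b - x < (b - u) / mp := by linarith [hx2.1]
      have h6 := (lt_div_iff₀ hmp).mp h5
      nlinarith
    · nlinarith [hx2.2]
  have := hsub hpx
  rw [ap_mul, this, hx1]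
  ring

lemma rslope_one (a : ℝ) : HasRSlope 1 a 1 := by
  filter_upwards with x
  rw [ap_one]
  ring

lemma lslope_one (b : ℝ) : HasLSlope 1 b 1 := by
  filter_upwards with x
  rw [ap_one]
  ring


lemma commutator_fixes_right (G : Subgroup PermR) (hPL : ∀ g ∈ G, IsPL g)
    {γ h : PermR} (hγ : γ ∈ G) (hh : h ∈ G) {a : ℝ}
    (ha0 : 0 ≤ a) (ha1 : a < 1) (hfγ : ap γ a = a) (hfh : ap h a = a) :
    ∃ ε > 0, ∀ x ∈ Ioo a (a + ε), ap (γ * h * γ⁻¹ * h⁻¹) x = x := by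
  have hγi : γ⁻¹ ∈ G := inv_mem hγ
  have hhi : h⁻¹ ∈ G := inv_mem hh
  have hfγi : ap γ⁻¹ a = a := ap_inv_eq_self.mpr hfγ
  have hfhi : ap h⁻¹ a = a := ap_inv_eq_self.mpr hfh
  obtain ⟨mγ, Hγ⟩ := exists_rslope (hPL γ hγ) ha0 ha1 hfγ
  obtain ⟨mγi, Hγi⟩ := exists_rslope (hPL γ⁻¹ hγi) ha0 ha1 hfγi
  obtain ⟨mh, Hh⟩ := exists_rslope (hPL h hh) ha0 ha1 hfh
  obtain ⟨mhi, Hhi⟩ := exists_rslope (hPL h⁻¹ hhi) ha0 ha1 hfhi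
  have hm1 : γ * h ∈ G := mul_mem hγ hh
  have hm2 : γ * h * γ⁻¹ ∈ G := mul_mem hm1 hγi
  have hf1 : ap (γ * h) a = a := by rw [ap_mul, hfγ, hfh]
  have hf2 : ap (γ * h * γ⁻¹) a = a := by rw [ap_mul, hf1, hfγi]
  have s1 : HasRSlope (γ * h) a (mγ * mh) := rslope_mul (hPL γ hγ) hfγ Hγ Hh
  have s2 : HasRSlope (γ * h * γ⁻¹) a (mγ * mh * mγi) :=
    rslope_mul (hPL _ hm1) hf1 s1 Hγi
  have s3 : HasRSlope (γ * h * γ⁻¹ * h⁻¹) a (mγ * mh * mγi * mhi) :=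
    rslope_mul (hPL _ hm2) hf2 s2 Hhi
  have e1 : mγ * mγi = 1 := by
    have := rslope_mul (hPL γ hγ) hfγ Hγ Hγi
    rw [mul_inv_cancel] at this
    exact rslope_unique this (rslope_one a)
  have e2 : mh * mhi = 1 := by
    have := rslope_mul (hPL h hh) hfh Hh Hhi
    rw [mul_inv_cancel] at this
    exact rslope_unique this (rslope_one a)
  have etot : mγ * mh * mγi * mhi = 1 := by
    calc mγ * mh * mγi * mhi = (mγ * mγi) * (mh * mhi) := by ring
    _ = 1 := by rw [e1, e2, one_mul]
  rw [etot] at s3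
  have hev : ∀ᶠ x in nhdsWithin a (Ioi a), ap (γ * h * γ⁻¹ * h⁻¹) x = x := by
    filter_upwards [s3] with x hx
    rw [hx]; ring
  obtain ⟨u, hu, hsub⟩ := mem_nhdsGT_iff_exists_Ioo_subset.mp hev
  exact ⟨u - a, sub_pos.mpr hu, fun x hx => hsub (by
    constructor
    · exact hx.1
    · linarith [hx.2])⟩

lemma commutator_fixes_left (G : Subgroup PermR) (hPL : ∀ g ∈ G, IsPL g)
    {γ h : PermR} (hγ : γ ∈ G) (hh : h ∈ G) {b : ℝ}
    (hb0 : 0 < b) (hb1 : b ≤ 1) (hfγ : ap γ b = b) (hfh : ap h b = b) :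
    ∃ ε > 0, ∀ x ∈ Ioo (b - ε) b, ap (γ * h * γ⁻¹ * h⁻¹) x = x := by
  have hγi : γ⁻¹ ∈ G := inv_mem hγ
  have hhi : h⁻¹ ∈ G := inv_mem hh
  have hfγi : ap γ⁻¹ b = b := ap_inv_eq_self.mpr hfγ
  have hfhi : ap h⁻¹ b = b := ap_inv_eq_self.mpr hfh
  obtain ⟨mγ, Hγ⟩ := exists_lslope (hPL γ hγ) hb0 hb1 hfγ
  obtain ⟨mγi, Hγi⟩ := exists_lslope (hPL γ⁻¹ hγi) hb0 hb1 hfγi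
  obtain ⟨mh, Hh⟩ := exists_lslope (hPL h hh) hb0 hb1 hfh
  obtain ⟨mhi, Hhi⟩ := exists_lslope (hPL h⁻¹ hhi) hb0 hb1 hfhi
  have hm1 : γ * h ∈ G := mul_mem hγ hh
  have hm2 : γ * h * γ⁻¹ ∈ G := mul_mem hm1 hγi
  have hf1 : ap (γ * h) b = b := by rw [ap_mul, hfγ, hfh]
  have hf2 : ap (γ * h * γ⁻¹) b = b := by rw [ap_mul, hf1, hfγi]
  have s1 : HasLSlope (γ * h) b (mγ * mh) := lslope_mul (hPL γ hγ) hfγ Hγ Hh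
  have s2 : HasLSlope (γ * h * γ⁻¹) b (mγ * mh * mγi) :=
    lslope_mul (hPL _ hm1) hf1 s1 Hγi
  have s3 : HasLSlope (γ * h * γ⁻¹ * h⁻¹) b (mγ * mh * mγi * mhi) :=
    lslope_mul (hPL _ hm2) hf2 s2 Hhi
  have e1 : mγ * mγi = 1 := by
    have := lslope_mul (hPL γ hγ) hfγ Hγ Hγi
    rw [mul_inv_cancel] at this
    exact lslope_unique this (lslope_one b)
  have e2 : mh * mhi = 1 := by
    have := lslope_mul (hPL h hh) hfh Hh Hhi
    rw [mul_inv_cancel] at this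
    exact lslope_unique this (lslope_one b)
  have etot : mγ * mh * mγi * mhi = 1 := by
    calc mγ * mh * mγi * mhi = (mγ * mγi) * (mh * mhi) := by ring
    _ = 1 := by rw [e1, e2, one_mul]
  rw [etot] at s3
  have hev : ∀ᶠ x in nhdsWithin b (Iio b), ap (γ * h * γ⁻¹ * h⁻¹) x = x := by
    filter_upwards [s3] with x hx
    rw [hx]; ring
  obtain ⟨u, hu, hsub⟩ := mem_nhdsLT_iff_exists_Ioo_subset.mp hev
  exact ⟨b - u, sub_pos.mpr hu, fun x hx => hsub (by
    constructor
    · linarith [hx.1]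
    · exact hx.2)⟩

/-- Every point in the support of a PL map lies in an orbital, and that orbital
is extremal among fixed points. -/
lemma exists_orbital_of_mem_supp {w : PermR} (hw : IsPL w) {x₀ : ℝ} (hx₀ : x₀ ∈ Supp w) :
    ∃ s t : ℝ, IsOrbital w s t ∧ s < x₀ ∧ x₀ < t ∧
      (∀ z, z ≤ x₀ → z ∉ Supp w → z ≤ s) ∧ (∀ z, x₀ ≤ z → z ∉ Supp w → t ≤ z) := by
  have hx01 : x₀ ∈ Ioo (0:ℝ) 1 := hw.supp_subset hx₀
  have hfixset : IsClosed {x : ℝ | ap w x = x} := isClosed_eq hw.continuous continuous_id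
  set X := Iic x₀ ∩ {x : ℝ | ap w x = x} with hX
  set Y := Ici x₀ ∩ {x : ℝ | ap w x = x} with hY
  have hXc : IsClosed X := isClosed_Iic.inter hfixset
  have hYc : IsClosed Y := isClosed_Ici.inter hfixset
  have h0X : (0:ℝ) ∈ X := ⟨le_of_lt hx01.1, hw.2.1 0 (by simp)⟩
  have h1Y : (1:ℝ) ∈ Y := ⟨le_of_lt hx01.2, hw.2.1 1 (by simp)⟩
  have hXb : BddAbove X := ⟨x₀, fun y hy => hy.1⟩
  have hYb : BddBelow Y := ⟨x₀, fun y hy => hy.1⟩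
  set s := sSup X with hs
  set t := sInf Y with ht
  have hsX : s ∈ X := hXc.csSup_mem ⟨0, h0X⟩ hXb
  have htY : t ∈ Y := hYc.csInf_mem ⟨1, h1Y⟩ hYb
  have hsfix : s ∉ Supp w := not_mem_supp.mpr hsX.2
  have htfix : t ∉ Supp w := not_mem_supp.mpr htY.2
  have hslt : s < x₀ := lt_of_le_of_ne hsX.1 (fun hc => hx₀ (hc ▸ hsX.2))
  have htgt : x₀ < t := lt_of_le_of_ne (htY.1) (fun hc => hx₀ (hc ▸ htY.2))
  refine ⟨s, t, ⟨hslt.trans htgt, ?_, hsfix, htfix⟩, hslt, htgt, ?_, ?_⟩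
  · intro x hx
    by_contra hfx
    rw [not_mem_supp] at hfx
    rcases le_or_gt x x₀ with hle | hlt
    · exact absurd (le_csSup hXb ⟨hle, hfx⟩) (not_le.mpr hx.1)
    · exact absurd (csInf_le hYb ⟨le_of_lt hlt, hfx⟩) (not_le.mpr hx.2)
  · intro z hz hzf
    exact le_csSup hXb ⟨hz, not_mem_supp.mp hzf⟩
  · intro z hz hzf
    exact csInf_le hYb ⟨hz, not_mem_supp.mp hzf⟩


/-- A one-sided overlap sharing a left endpoint yields a transition chain. -/
lemma tc_of_oso_left (G : Subgroup PermR) (hPL : ∀ g ∈ G, IsPL g)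
    {g h : PermR} (hg : g ∈ G) (hh : h ∈ G) {a b c : ℝ}
    (hog : IsOrbital g a b) (hoh : IsOrbital h a c) (hac : a < c) (hcb : c < b) :
    AdmitsTransitionChain G := by
  obtain ⟨ha0, hb1⟩ := hog.subset_unit (hPL g hg)
  have ha1 : a < 1 := lt_of_lt_of_le (hac.trans hcb) hb1
  have hcsupp : c ∈ Supp g := hog.2.1 ⟨hac, hcb⟩
  obtain ⟨γ, hγG, hγfa, hγc⟩ : ∃ γ ∈ G, ap γ a = a ∧ c < ap γ c := by
    rcases lt_or_gt_of_ne (mem_supp.mp hcsupp) with hlt | hgt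
    · refine ⟨g⁻¹, inv_mem hg, ap_inv_eq_self.mpr (not_mem_supp.mp hog.2.2.1), ?_⟩
      have := (hPL g hg).inv_mono hlt
      rwa [ap_inv_ap] at this
    · exact ⟨g, hg, not_mem_supp.mp hog.2.2.1, hgt⟩
  have hγPL : IsPL γ := hPL γ hγG
  set cm := ap γ⁻¹ c with hcm
  have hcmc : cm < c := by
    have := hγPL.inv_mono hγc
    rwa [ap_inv_ap] at this
  have hacm : a < cm := by
    have := hγPL.inv_mono hac
    rwa [ap_inv_eq_self.mpr hγfa] at this
  set u := γ * h * γ⁻¹ with hu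
  have huG : u ∈ G := mul_mem (mul_mem hγG hh) (inv_mem hγG)
  have hou : IsOrbital u a cm := by
    have := hoh.conj γ hγPL
    rwa [ap_inv_eq_self.mpr hγfa] at this
  set w := u * h⁻¹ with hw
  have hwG : w ∈ G := mul_mem huG (inv_mem hh)
  have hwcm : cm ∈ Supp w := by
    rw [mem_supp, ap_mul, not_mem_supp.mp hou.2.2.2]
    have : cm ∈ Supp h⁻¹ := by
      rw [supp_inv]
      exact hoh.2.1 ⟨hacm, hcmc⟩
    exact mem_supp.mp this
  obtain ⟨ε, hε, hfixε⟩ := commutator_fixes_right G hPL hγG hh ha0 ha1 hγfa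
    (not_mem_supp.mp hoh.2.2.1)
  obtain ⟨s, t, how, hsc, hct, hchar, -⟩ := exists_orbital_of_mem_supp (hPL w hwG) hwcm
  have has : a < s := by
    set z := min (a + ε / 2) ((a + cm) / 2) with hz
    have hz1 : a < z := lt_min (by linarith) (by linarith)
    have hz2 : z < a + ε := lt_of_le_of_lt (min_le_left _ _) (by linarith)
    have hz3 : z ≤ cm := le_trans (min_le_right _ _) (by linarith)
    have hzfix : z ∉ Supp w := not_mem_supp.mpr (hfixε z ⟨hz1, hz2⟩)
    exact lt_of_lt_of_le hz1 (hchar z hz3 hzfix)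
  exact ⟨u, huG, w, hwG, a, cm, s, t, hou, how, has, hsc, hct⟩

/-- A one-sided overlap sharing a right endpoint yields a transition chain. -/
lemma tc_of_oso_right (G : Subgroup PermR) (hPL : ∀ g ∈ G, IsPL g)
    {g h : PermR} (hg : g ∈ G) (hh : h ∈ G) {a b c : ℝ}
    (hog : IsOrbital g a b) (hoh : IsOrbital h c b) (hac : a < c) (hcb : c < b) :
    AdmitsTransitionChain G := by
  obtain ⟨ha0, hb1⟩ := hog.subset_unit (hPL g hg)
  have hb0 : 0 < b := lt_of_le_of_lt ha0 (hac.trans hcb)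
  have hcsupp : c ∈ Supp g := hog.2.1 ⟨hac, hcb⟩
  obtain ⟨γ, hγG, hγfb, hγc⟩ : ∃ γ ∈ G, ap γ b = b ∧ ap γ c < c := by
    rcases lt_or_gt_of_ne (mem_supp.mp hcsupp) with hlt | hgt
    · exact ⟨g, hg, not_mem_supp.mp hog.2.2.2, hlt⟩
    · refine ⟨g⁻¹, inv_mem hg, ap_inv_eq_self.mpr (not_mem_supp.mp hog.2.2.2), ?_⟩
      have := (hPL g hg).inv_mono hgt
      rwa [ap_inv_ap] at this
  have hγPL : IsPL γ := hPL γ hγG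
  set cp := ap γ⁻¹ c with hcp
  have hccp : c < cp := by
    have := hγPL.inv_mono hγc
    rwa [ap_inv_ap] at this
  have hcpb : cp < b := by
    have := hγPL.inv_mono hcb
    rwa [ap_inv_eq_self.mpr hγfb] at this
  set u := γ * h * γ⁻¹ with hu
  have huG : u ∈ G := mul_mem (mul_mem hγG hh) (inv_mem hγG)
  have hou : IsOrbital u cp b := by
    have := hoh.conj γ hγPL
    rwa [ap_inv_eq_self.mpr hγfb] at this
  set w := u * h⁻¹ with hw
  have hwG : w ∈ G := mul_mem huG (inv_mem hh)
  have hwcp : cp ∈ Supp w := by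
    rw [mem_supp, ap_mul, not_mem_supp.mp hou.2.2.1]
    have : cp ∈ Supp h⁻¹ := by
      rw [supp_inv]
      exact hoh.2.1 ⟨hccp, hcpb⟩
    exact mem_supp.mp this
  obtain ⟨ε, hε, hfixε⟩ := commutator_fixes_left G hPL hγG hh hb0 hb1 hγfb
    (not_mem_supp.mp hoh.2.2.2)
  obtain ⟨s, t, how, hsc, hct, -, hchar⟩ := exists_orbital_of_mem_supp (hPL w hwG) hwcp
  have htb : t < b := by
    set z := max (b - ε / 2) ((cp + b) / 2) with hz
    have hz1 : z < b := max_lt (by linarith) (by linarith)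
    have hz2 : b - ε < z := lt_of_lt_of_le (by linarith) (le_max_left _ _)
    have hz3 : cp ≤ z := le_trans (by linarith) (le_max_right _ _)
    have hzfix : z ∉ Supp w := not_mem_supp.mpr (hfixε z ⟨hz2, hz1⟩)
    exact lt_of_le_of_lt (hchar z hz3 hzfix) hz1
  exact ⟨w, hwG, u, huG, s, t, cp, b, how, hou, hsc, hct, htb⟩


lemma orbital_has_breakpoint {g : PermR} (hg : IsPL g) {α β : ℝ} (ho : IsOrbital g α β) :
    ∃ x ∈ Ioo α β, x ∈ Breakpoints g := by
  by_contra hc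
  push_neg at hc
  have hJ : Ioo α β ⊆ Ioo (0:ℝ) 1 := ho.2.1.trans hg.supp_subset
  obtain ⟨m, c, heq⟩ := affine_of_no_breakpoints ho.1 hJ hc
  have hfα : ap g α = α := not_mem_supp.mp ho.2.2.1
  have hfβ : ap g β = β := not_mem_supp.mp ho.2.2.2
  have hev1 : ∀ᶠ x in nhdsWithin α (Ioi α), ap g x = m * x + c := by
    filter_upwards [Ioo_mem_nhdsGT_of_mem (show α ∈ Ico α β from ⟨le_refl α, ho.1⟩)] with x hx
    exact heq x hx
  have hev2 : ∀ᶠ x in nhdsWithin β (Iio β), ap g x = m * x + c := by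
    filter_upwards [Ioo_mem_nhdsLT_of_mem (show β ∈ Ioc α β from ⟨ho.1, le_refl β⟩)] with x hx
    exact heq x hx
  have ht1 : Filter.Tendsto (ap g) (nhdsWithin α (Ioi α)) (nhds α) := by
    have h0 : Filter.Tendsto (ap g) (nhdsWithin α (Ioi α)) (nhds (ap g α)) :=
      (hg.continuous.tendsto α).mono_left nhdsWithin_le_nhds
    rwa [hfα] at h0
  have ht2 : Filter.Tendsto (ap g) (nhdsWithin β (Iio β)) (nhds β) := by
    have h0 : Filter.Tendsto (ap g) (nhdsWithin β (Iio β)) (nhds (ap g β)) :=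
      (hg.continuous.tendsto β).mono_left nhdsWithin_le_nhds
    rwa [hfβ] at h0
  have hl1 : Filter.Tendsto (fun x => m * x + c) (nhdsWithin α (Ioi α)) (nhds (m * α + c)) :=
    (((continuous_const.mul continuous_id).add continuous_const).tendsto α).mono_left
      nhdsWithin_le_nhds
  have hl2 : Filter.Tendsto (fun x => m * x + c) (nhdsWithin β (Iio β)) (nhds (m * β + c)) :=
    (((continuous_const.mul continuous_id).add continuous_const).tendsto β).mono_left
      nhdsWithin_le_nhds
  have hαe : m * α + c = α := tendsto_nhds_unique hl1 (ht1.congr' hev1)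
  have hβe : m * β + c = β := tendsto_nhds_unique hl2 (ht2.congr' hev2)
  have hm1 : m = 1 := by
    have hne : β - α ≠ 0 := sub_ne_zero.mpr (ne_of_gt ho.1)
    have : m * (β - α) = 1 * (β - α) := by ring_nf; linarith
    exact mul_right_cancel₀ hne this
  have hc0 : c = 0 := by rw [hm1] at hαe; linarith
  have hmid : (α + β) / 2 ∈ Supp g := ho.2.1 ⟨by linarith [ho.1], by linarith [ho.1]⟩
  apply hmid
  rw [heq _ ⟨by linarith [ho.1], by linarith [ho.1]⟩, hm1, hc0]
  ring

lemma orbital_eq_of_inter {g : PermR} {α β α' β' : ℝ} (h1 : IsOrbital g α β)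
    (h2 : IsOrbital g α' β') (hne : (Ioo α β ∩ Ioo α' β').Nonempty) : α = α' ∧ β = β' := by
  obtain ⟨x, hx1, hx2⟩ := hne
  constructor
  · rcases lt_trichotomy α α' with hlt | he | hgt
    · exact absurd (h1.2.1 ⟨hlt, hx2.1.trans hx1.2⟩) h2.2.2.1
    · exact he
    · exact absurd (h2.2.1 ⟨hgt, hx1.1.trans hx2.2⟩) h1.2.2.1
  · rcases lt_trichotomy β β' with hlt | he | hgt
    · exact absurd (h2.2.1 ⟨hx2.1.trans hx1.2, hlt⟩) h1.2.2.2
    · exact he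
    · exact absurd (h1.2.1 ⟨hx1.1.trans hx2.2, hgt⟩) h2.2.2.2

lemma orbitals_finite {g : PermR} (hg : IsPL g) : {o : ℝ × ℝ | IsOrbital g o.1 o.2}.Finite := by
  classical
  set f : ℝ × ℝ → ℝ := fun o =>
    if ho : ∃ x ∈ Ioo o.1 o.2, x ∈ Breakpoints g then ho.choose else 0 with hf
  have hmap : ∀ o : ℝ × ℝ, IsOrbital g o.1 o.2 →
      f o ∈ Ioo o.1 o.2 ∧ f o ∈ Breakpoints g := by
    intro o ho
    have hex := orbital_has_breakpoint hg ho
    rw [hf]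
    simp only [dif_pos hex]
    exact ⟨hex.choose_spec.1, hex.choose_spec.2⟩
  apply Set.Finite.of_finite_image (f := f)
  · apply hg.2.2.subset
    rintro y ⟨o, ho, rfl⟩
    exact (hmap o ho).2
  · intro o1 h1 o2 h2 hfe
    have hx1 := (hmap o1 h1).1
    have hx2 := (hmap o2 h2).1
    rw [hfe] at hx1
    have := orbital_eq_of_inter h1 h2 ⟨f o2, hx1, hx2⟩
    exact Prod.ext this.1 this.2

/-- Descent: a transition chain yields a one-sided overlap. -/
lemma oso_of_tc (G : Subgroup PermR) (hPL : ∀ g ∈ G, IsPL g) :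
    ∀ n : ℕ, ∀ g h : PermR, ∀ a b c d : ℝ, g ∈ G → h ∈ G →
    IsOrbital g a b → IsOrbital h c d → a < c → c < b → b < d →
    ({o : ℝ × ℝ | (IsOrbital g o.1 o.2 ∨ IsOrbital h o.1 o.2) ∧ o.1 < a}).ncard ≤ n →
    AdmitsOneSidedOverlap G := by
  intro n
  induction n using Nat.strong_induction_on with
  | _ n IH =>
    intro g h a b c d hgG hhG hog hoh hac hcb hbd hcard
    by_cases hah : a ∈ Supp h
    · -- descend to the orbital of h containing a
      obtain ⟨p, q, hohpq, hpa, haq, -, hqchar⟩ :=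
        exists_orbital_of_mem_supp (hPL h hhG) hah
      have hqc : q ≤ c := hqchar c (le_of_lt hac) hoh.2.2.1
      have hqb : q < b := lt_of_le_of_lt hqc hcb
      -- measure decreases
      set Sp := {o : ℝ × ℝ | (IsOrbital h o.1 o.2 ∨ IsOrbital g o.1 o.2) ∧ o.1 < p} with hSp
      set Sa := {o : ℝ × ℝ | (IsOrbital g o.1 o.2 ∨ IsOrbital h o.1 o.2) ∧ o.1 < a} with hSa
      have hfinbase : ({o : ℝ × ℝ | IsOrbital g o.1 o.2 ∨ IsOrbital h o.1 o.2}).Finite := by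
        rw [Set.setOf_or]
        exact (orbitals_finite (hPL g hgG)).union (orbitals_finite (hPL h hhG))
      have hfinSa : Sa.Finite := hfinbase.subset (fun o ho => ho.1)
      have hss : Sp ⊂ Sa := by
        constructor
        · rintro o ⟨hor, holt⟩
          exact ⟨hor.symm, holt.trans hpa⟩
        · intro hcon
          have : ((p, q) : ℝ × ℝ) ∈ Sa := ⟨Or.inr hohpq, hpa⟩
          have := hcon this
          exact absurd this.2 (lt_irrefl p)
      have hlt : Sp.ncard < Sa.ncard := Set.ncard_lt_ncard hss hfinSa
      exact IH Sp.ncard (lt_of_lt_of_le hlt hcard) h g p q a b hhG hgG hohpq hog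
        hpa haq hqb le_rfl
    · -- conjugate g by h to get a one-sided overlap at a
      set u := h * g * h⁻¹ with hu
      have huG : u ∈ G := mul_mem (mul_mem hhG hgG) (inv_mem hhG)
      have hfa : ap h a = a := not_mem_supp.mp hah
      have hou : IsOrbital u a (ap h⁻¹ b) := by
        have := hog.conj h (hPL h hhG)
        rwa [ap_inv_eq_self.mpr hfa] at this
      set b' := ap h⁻¹ b with hb'
      have hbs : b ∈ Supp h⁻¹ := by
        rw [supp_inv]
        exact hoh.2.1 ⟨hcb, hbd⟩
      have hab' : a < b' := hou.1
      rcases lt_or_gt_of_ne (mem_supp.mp hbs) with hlt | hgt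
      · exact ⟨g, hgG, u, huG, a, b, b', hab', hlt, Or.inl ⟨hog, hou⟩⟩
      · exact ⟨u, huG, g, hgG, a, b', b, hog.1, hgt, Or.inl ⟨hou, hog⟩⟩

end Lemmas

theorem statement4 (G : Subgroup PermR) (hPL : ∀ g ∈ G, IsPL g) :
    (AdmitsTransitionChain G ↔ AdmitsOneSidedOverlap G) ∧
    (AdmitsTransitionChain G ↔ AdmitsBadOverlap G) := by
  have hTCOSO : AdmitsTransitionChain G → AdmitsOneSidedOverlap G := by
    rintro ⟨g, hgG, h, hhG, a, b, c, d, hog, hoh, h1, h2, h3⟩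
    exact oso_of_tc G hPL _ g h a b c d hgG hhG hog hoh h1 h2 h3 le_rfl
  have hOSOTC : AdmitsOneSidedOverlap G → AdmitsTransitionChain G := by
    rintro ⟨g, hgG, h, hhG, a, b, c, hac, hcb, hcase⟩
    rcases hcase with ⟨hog, hoh⟩ | ⟨hog, hoh⟩
    · exact tc_of_oso_left G hPL hgG hhG hog hoh hac hcb
    · exact tc_of_oso_right G hPL hgG hhG hog hoh hac hcb
  have hTCBad : AdmitsTransitionChain G → AdmitsBadOverlap G := by
    rintro ⟨g, hgG, h, hhG, a, b, c, d, hog, hoh, h1, h2, h3⟩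
    refine ⟨g, hgG, h, hhG, a, b, c, d, hog, hoh, ?_, ?_, ?_, ?_⟩
    · exact ⟨(c + b) / 2, ⟨by linarith, by linarith⟩, ⟨by linarith, by linarith⟩⟩
    · intro hE
      have hcmem : c ∈ Ioo a b := ⟨h1, h2⟩
      rw [hE] at hcmem
      exact lt_irrefl c hcmem.1
    · intro hsub
      have := hsub (left_mem_Icc.mpr (le_of_lt hog.1))
      exact absurd this.1 (not_lt.mpr (le_of_lt h1))
    · intro hsub
      have := hsub (right_mem_Icc.mpr (le_of_lt hoh.1))
      exact absurd this.2 (not_lt.mpr (le_of_lt h3))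
  have hBadTC : AdmitsBadOverlap G → AdmitsTransitionChain G := by
    rintro ⟨f, hfG, g', hg'G, a, b, c, d, hof, hog', ⟨x, hx1, hx2⟩, hne2, hni1, hni2⟩
    rcases lt_trichotomy a c with hacc | hacc | hacc
    · rcases lt_trichotomy b d with hbd | hbd | hbd
      · exact ⟨f, hfG, g', hg'G, a, b, c, d, hof, hog', hacc, hx2.1.trans hx1.2, hbd⟩
      · subst hbd
        exact tc_of_oso_right G hPL hfG hg'G hof hog' hacc (hx2.1.trans hx1.2)
      · exact absurd (fun y hy => ⟨lt_of_lt_of_le hacc hy.1, lt_of_le_of_lt hy.2 hbd⟩) hni2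
    · subst hacc
      rcases lt_trichotomy b d with hbd | hbd | hbd
      · exact tc_of_oso_left G hPL hg'G hfG hog' hof hof.1 hbd
      · subst hbd
        exact absurd rfl hne2
      · exact tc_of_oso_left G hPL hfG hg'G hof hog' hog'.1 hbd
    · rcases lt_trichotomy d b with hbd | hbd | hbd
      · exact ⟨g', hg'G, f, hfG, c, d, a, b, hog', hof, hacc, hx1.1.trans hx2.2, hbd⟩
      · subst hbd
        exact tc_of_oso_right G hPL hg'G hfG hog' hof hacc (hx1.1.trans hx2.2)
      · exact absurd (fun y hy => ⟨lt_of_lt_of_le hacc hy.1, lt_of_le_of_lt hy.2 hbd⟩) hni1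
  exact ⟨⟨hTCOSO, hOSOTC⟩, ⟨hTCBad, hBadTC⟩⟩

end PLPaper
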